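/- arXiv:1601.07407 — 2 statements merged into one kernel-verified Lean document; each statement's English description precedes it below -/
import Mathlib

section
/- Let K be a linearly ordered field, Γ₀ a linearly ordered commutative group with zero, and v : K → Γ₀ a valuation (multiplicative, v(0) = 0, v(1) = 1, v(a + b) ≤ max(v(a), v(b))) that is compatible with the order of K, i.e., 0 ≤ a ≤ b implies v(a) ≤ v(b). Then for every n ≥ 0, every integer p ≥ 1, and all points x = (x₁, …, xₙ), y = (y₁, …, yₙ) ∈ Kⁿ one has v(∑_{i=1}^n |xᵢ − yᵢ|^p) = (max_{1 ≤ i ≤ n} v(xᵢ − yᵢ))^p (where for n = 0 both sides are 0). -/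
/-- In a linearly ordered commutative monoid with zero, `0` is the bottom element. -/
noncomputable instance (priority := 10) instOrderBotOfLinearOrderedCommMonoidWithZero
    {Γ₀ : Type*} [LinearOrderedCommMonoidWithZero Γ₀] : OrderBot Γ₀ where
  bot := 0
  bot_le _ := zero_le'

theorem stmt_1 {K Γ₀ : Type*} [Field K] [LinearOrder K] [IsStrictOrderedRing K] [LinearOrderedCommGroupWithZero Γ₀]
    (v : Valuation K Γ₀)
    (hv : ∀ a b : K, 0 ≤ a → a ≤ b → v a ≤ v b)
    (n p : ℕ) (hp : 1 ≤ p) (x y : Fin n → K) :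
    v (∑ i, |x i - y i| ^ p) = (Finset.univ.sup fun i => v (x i - y i)) ^ p := by
  have hterm : ∀ i : Fin n, v (|x i - y i| ^ p) = v (x i - y i) ^ p := by
    intro i
    rw [map_pow]
    congr 1
    rcases abs_choice (x i - y i) with h | h
    · rw [h]
    · rw [h, Valuation.map_neg]
  rcases Nat.eq_zero_or_pos n with hn | hn
  · subst hn
    simp only [Finset.univ_eq_empty, Finset.sum_empty, Finset.sup_empty, map_zero]
    rw [show (⊥ : Γ₀) = 0 from le_antisymm bot_le zero_le', zero_pow (Nat.one_le_iff_ne_zero.mp hp)]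
  · apply le_antisymm
    · apply v.map_sum_le
      intro i _
      rw [hterm i]
      have h := Finset.le_sup (f := fun i => v (x i - y i)) (Finset.mem_univ i)
      exact pow_le_pow_left' h p
    · have hne : (Finset.univ : Finset (Fin n)).Nonempty := by
        simpa using Finset.univ_nonempty_iff.mpr (Fin.pos_iff_nonempty.mp hn)
      obtain ⟨i, _, hi⟩ := Finset.exists_mem_eq_sup Finset.univ hne
        (fun i => v (x i - y i))
      rw [hi, ← hterm i]
      apply hv _ _ (by positivity)
      exact Finset.single_le_sum (f := fun j => |x j - y j| ^ p) (fun j _ => by positivity) (Finset.mem_univ i)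
end

section
/- Let K be a real closed field with natural valuation ring A and ideal of infinitesimals I. Let a, x, y ∈ K satisfy y² + (x² − a²)(x² − 1) = 0, with a ∈ I, x ∈ A, and x ∉ I, and set z = y/x. Then z − 1 ∈ A ∖ I, z + 1 ∈ A ∖ I, and −1 < z < 1. -/
set_option maxHeartbeats 1000000


/-- A real closed field: a linearly ordered field in which every nonnegative element
is a square and every polynomial of odd degree has a root. -/
def IsRealClosedOrd (K : Type*) [Field K] [LinearOrder K] [IsStrictOrderedRing K] : Prop :=
  (∀ a : K, 0 ≤ a → ∃ b : K, b ^ 2 = a) ∧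
  ∀ p : Polynomial K, Odd p.natDegree → ∃ x : K, p.eval x = 0

/-- The natural valuation ring of a linearly ordered field: the convex hull of `ℚ`,
i.e. the elements bounded in absolute value by a natural number. -/
def natValRing (K : Type*) [Field K] [LinearOrder K] [IsStrictOrderedRing K] : Set K :=
  { a : K | ∃ n : ℕ, |a| ≤ (n : K) }

/-- The ideal of infinitesimals of a linearly ordered field: the maximal ideal of the
natural valuation ring. -/
def infinitesimals (K : Type*) [Field K] [LinearOrder K] [IsStrictOrderedRing K] : Set K :=
  { a : K | ∀ n : ℕ, 0 < n → |a| < 1 / (n : K) }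

theorem stmt_9 {K : Type*} [Field K] [LinearOrder K] [IsStrictOrderedRing K] (hK : IsRealClosedOrd K)
    (a x y : K) (heq : y ^ 2 + (x ^ 2 - a ^ 2) * (x ^ 2 - 1) = 0)
    (ha : a ∈ infinitesimals K) (hxA : x ∈ natValRing K) (hxI : x ∉ infinitesimals K) :
    (y / x - 1 ∈ natValRing K ∧ y / x - 1 ∉ infinitesimals K) ∧
    (y / x + 1 ∈ natValRing K ∧ y / x + 1 ∉ infinitesimals K) ∧
    -1 < y / x ∧ y / x < 1 := by
  simp only [infinitesimals, Set.mem_setOf_eq] at hxI ha ⊢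
  push_neg at hxI
  obtain ⟨n, hn, hnx⟩ := hxI
  have ht : (0:K) < (n:K) := by exact_mod_cast hn
  have hax : |a| < |x| := lt_of_lt_of_le (ha n hn) hnx
  have hxabs : (0:K) < |x| := lt_of_lt_of_le (by positivity) hnx
  have hx0 : (0:K) < x ^ 2 := by nlinarith [sq_abs x]
  have ha2x : a ^ 2 < x ^ 2 := by nlinarith [sq_abs a, sq_abs x, abs_nonneg a]
  have heq' : y ^ 2 = (x ^ 2 - a ^ 2) * (1 - x ^ 2) := by linear_combination heq
  have h1x : 0 ≤ 1 - x ^ 2 := by nlinarith [sq_nonneg y]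
  have hz : (y / x) ^ 2 = y ^ 2 / x ^ 2 := div_pow y x 2
  have hz1 : (y / x) ^ 2 ≤ 1 - x ^ 2 := by
    rw [hz, div_le_iff₀ hx0]
    nlinarith [mul_nonneg h1x (sq_nonneg a)]
  have hzsq : (y / x) ^ 2 < 1 := by linarith
  have habs1 : |y / x| < 1 := by
    rw [← sq_lt_one_iff_abs_lt_one]; exact hzsq
  obtain ⟨hgt, hlt⟩ := abs_lt.mp habs1
  have hnx' : 1 ≤ |x| * (n:K) := (div_le_iff₀ ht).mp hnx
  have hxt : 1 ≤ x ^ 2 * (n:K) ^ 2 := by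
    nlinarith [sq_abs x, mul_le_mul hnx' hnx' zero_le_one (by positivity : (0:K) ≤ |x| * n)]
  refine ⟨⟨⟨2, ?_⟩, ?_⟩, ⟨⟨2, ?_⟩, ?_⟩, hgt, hlt⟩
  · rw [abs_le]; constructor <;> push_cast <;> linarith
  · intro h
    have h2 := h (2 * n ^ 2) (by positivity)
    have habs : |y / x - 1| = 1 - y / x := by
      rw [abs_of_neg (by linarith)]; ring
    rw [habs] at h2
    push_cast at h2
    have h2' : (1 - y / x) * (2 * (n:K) ^ 2) < 1 := by
      rw [← lt_div_iff₀ (by positivity)]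
      exact h2
    nlinarith [mul_lt_mul_of_pos_right h2' (show (0:K) < 1 + y / x by linarith),
      mul_le_mul_of_nonneg_right (show x ^ 2 ≤ 1 - (y / x) ^ 2 by linarith)
        (sq_nonneg ((n:K)))]
  · rw [abs_le]; constructor <;> push_cast <;> linarith
  · intro h
    have h2 := h (2 * n ^ 2) (by positivity)
    have habs : |y / x + 1| = y / x + 1 := abs_of_pos (by linarith)
    rw [habs] at h2
    push_cast at h2
    have h2' : (y / x + 1) * (2 * (n:K) ^ 2) < 1 := by
      rw [← lt_div_iff₀ (by positivity)]
      exact h2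
    nlinarith [mul_lt_mul_of_pos_right h2' (show (0:K) < 1 - y / x by linarith),
      mul_le_mul_of_nonneg_right (show x ^ 2 ≤ 1 - (y / x) ^ 2 by linarith)
        (sq_nonneg ((n:K)))]
end
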